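/- For every n ≥ 3, the commutator subgroup VB_n' equals the subgroup of VB_n generated by the set {a_m : m ∈ ℤ} ∪ {b_{m,0}, b_{m,1} : m ∈ ℤ} ∪ {f_m : m ∈ ℤ} ∪ {c_l : 3 ≤ l ≤ n−1} ∪ {g_{m,l} : m ∈ ℤ, 3 ≤ l ≤ n−1}. -/

import Mathlib

/-!
Common setup: the virtual braid group `VB n` and the welded braid group `WB n`
as presented groups, together with the distinguished elements of their
commutator subgroups used in the paper
"Commutator subgroups of virtual and welded braid groups".

Generators: for `i : Fin (n-1)`, `Sum.inl i` represents σ_{i+1} and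
`Sum.inr i` represents ρ_{i+1}.
-/

/-- The generating set of `VB n` (and `WB n`). -/
abbrev VBGen (n : ℕ) := (Fin (n - 1)) ⊕ (Fin (n - 1))

/-- The free group letter σ_i, for `1 ≤ i ≤ n-1` (junk value `1` otherwise). -/
def fσ (n i : ℕ) : FreeGroup (VBGen n) :=
  if h : 1 ≤ i ∧ i - 1 < n - 1 then FreeGroup.of (Sum.inl ⟨i - 1, h.2⟩) else 1

/-- The free group letter ρ_i, for `1 ≤ i ≤ n-1` (junk value `1` otherwise). -/
def fρ (n i : ℕ) : FreeGroup (VBGen n) :=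
  if h : 1 ≤ i ∧ i - 1 < n - 1 then FreeGroup.of (Sum.inr ⟨i - 1, h.2⟩) else 1

/-- The defining relators of the virtual braid group `VB n`. -/
def vbRels (n : ℕ) : Set (FreeGroup (VBGen n)) :=
  {r | ∃ i j, 1 ≤ i ∧ i + 2 ≤ j ∧ j ≤ n - 1 ∧
      (r = fσ n i * fσ n j * (fσ n i)⁻¹ * (fσ n j)⁻¹ ∨
       r = fρ n i * fρ n j * (fρ n i)⁻¹ * (fρ n j)⁻¹ ∨
       r = fσ n i * fρ n j * (fσ n i)⁻¹ * (fρ n j)⁻¹ ∨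
       r = fσ n j * fρ n i * (fσ n j)⁻¹ * (fρ n i)⁻¹)} ∪
  {r | ∃ i, 1 ≤ i ∧ i + 1 ≤ n - 1 ∧
      (r = fσ n i * fσ n (i+1) * fσ n i * (fσ n (i+1))⁻¹ * (fσ n i)⁻¹ * (fσ n (i+1))⁻¹ ∨
       r = fρ n i * fρ n (i+1) * fρ n i * (fρ n (i+1))⁻¹ * (fρ n i)⁻¹ * (fρ n (i+1))⁻¹ ∨
       r = fρ n i * fρ n (i+1) * fσ n i * (fρ n (i+1))⁻¹ * (fρ n i)⁻¹ * (fσ n (i+1))⁻¹)} ∪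
  {r | ∃ i, 1 ≤ i ∧ i ≤ n - 1 ∧ r = fρ n i * fρ n i}

/-- The virtual braid group on `n` strands. -/
abbrev VB (n : ℕ) := PresentedGroup (vbRels n)

/-- The generator σ_i of `VB n`. -/
def vσ (n i : ℕ) : VB n := PresentedGroup.mk (vbRels n) (fσ n i)

/-- The generator ρ_i of `VB n`. -/
def vρ (n i : ℕ) : VB n := PresentedGroup.mk (vbRels n) (fρ n i)

/-- a_m = σ_1^m (ρ_1 σ_1 ρ_1 σ_1⁻¹) σ_1^{-m}. -/
def va (n : ℕ) (m : ℤ) : VB n :=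
  (vσ n 1) ^ m * (vρ n 1 * vσ n 1 * vρ n 1 * (vσ n 1)⁻¹) * (vσ n 1) ^ (-m)

/-- b_{m,ε} = σ_1^m (ρ_1^ε σ_2 ρ_1^ε σ_1⁻¹) σ_1^{-m}. -/
def vb (n : ℕ) (m : ℤ) (ε : ℕ) : VB n :=
  (vσ n 1) ^ m * ((vρ n 1) ^ ε * vσ n 2 * (vρ n 1) ^ ε * (vσ n 1)⁻¹) * (vσ n 1) ^ (-m)

/-- c_l = σ_l σ_1⁻¹. -/
def vc (n l : ℕ) : VB n := vσ n l * (vσ n 1)⁻¹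

/-- f_{m,ε} = σ_1^m (ρ_1^ε ρ_2 ρ_1^{ε+1}) σ_1^{-m}; `f_m` is `vf n m 0`. -/
def vf (n : ℕ) (m : ℤ) (ε : ℕ) : VB n :=
  (vσ n 1) ^ m * ((vρ n 1) ^ ε * vρ n 2 * (vρ n 1) ^ (ε + 1)) * (vσ n 1) ^ (-m)

/-- g_{m,l} = σ_1^m (ρ_l ρ_1) σ_1^{-m}. -/
def vg (n : ℕ) (m : ℤ) (l : ℕ) : VB n :=
  (vσ n 1) ^ m * (vρ n l * vρ n 1) * (vσ n 1) ^ (-m)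

/-- The additional relators ρ_i σ_{i+1} σ_i (ρ_{i+1})⁻¹ σ_i⁻¹ σ_{i+1}⁻¹ of the
welded braid group. -/
def wbExtraRels (n : ℕ) : Set (FreeGroup (VBGen n)) :=
  {r | ∃ i, 1 ≤ i ∧ i + 1 ≤ n - 1 ∧
      r = fρ n i * fσ n (i+1) * fσ n i * (fρ n (i+1))⁻¹ * (fσ n i)⁻¹ * (fσ n (i+1))⁻¹}

/-- The defining relators of the welded braid group `WB n`. -/
def wbRels (n : ℕ) : Set (FreeGroup (VBGen n)) := vbRels n ∪ wbExtraRels n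

/-- The welded braid group on `n` strands. -/
abbrev WB (n : ℕ) := PresentedGroup (wbRels n)

/-- The generator σ_i of `WB n`. -/
def wσ (n i : ℕ) : WB n := PresentedGroup.mk (wbRels n) (fσ n i)

/-- The generator ρ_i of `WB n`. -/
def wρ (n i : ℕ) : WB n := PresentedGroup.mk (wbRels n) (fρ n i)

/-- a_m in `WB n`. -/
def wa (n : ℕ) (m : ℤ) : WB n :=
  (wσ n 1) ^ m * (wρ n 1 * wσ n 1 * wρ n 1 * (wσ n 1)⁻¹) * (wσ n 1) ^ (-m)

/-- f_{m,ε} in `WB n`; `f_m` is `wf n m 0`. -/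
def wf (n : ℕ) (m : ℤ) (ε : ℕ) : WB n :=
  (wσ n 1) ^ m * ((wρ n 1) ^ ε * wρ n 2 * (wρ n 1) ^ (ε + 1)) * (wσ n 1) ^ (-m)

/-- c_l in `WB n`. -/
def wc (n l : ℕ) : WB n := wσ n l * (wσ n 1)⁻¹

/-- g_{m,l} in `WB n`. -/
def wg (n : ℕ) (m : ℤ) (l : ℕ) : WB n :=
  (wσ n 1) ^ m * (wρ n l * wρ n 1) * (wσ n 1) ^ (-m)

/-! ### Auxiliary development for Statement 9 -/

namespace VBAux

open Multiplicative

variable (n : ℕ)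

theorem relOne {r : FreeGroup (VBGen n)} (h : r ∈ vbRels n) :
    PresentedGroup.mk (vbRels n) r = 1 :=
  (QuotientGroup.eq_one_iff r).mpr (Subgroup.subset_normalClosure h)

theorem fσ_eq (i : ℕ) (h1 : 1 ≤ i) (h2 : i - 1 < n - 1) :
    fσ n i = FreeGroup.of (Sum.inl ⟨i - 1, h2⟩) := dif_pos ⟨h1, h2⟩

theorem fρ_eq (i : ℕ) (h1 : 1 ≤ i) (h2 : i - 1 < n - 1) :
    fρ n i = FreeGroup.of (Sum.inr ⟨i - 1, h2⟩) := dif_pos ⟨h1, h2⟩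

theorem mkσ (i : ℕ) : PresentedGroup.mk (vbRels n) (fσ n i) = vσ n i := rfl
theorem mkρ (i : ℕ) : PresentedGroup.mk (vbRels n) (fρ n i) = vρ n i := rfl

theorem of_inl (k : ℕ) (hk : k < n - 1) :
    (PresentedGroup.of (Sum.inl ⟨k, hk⟩) : VB n) = vσ n (k + 1) := by
  unfold vσ
  rw [fσ_eq n (k + 1) (by omega) (by simpa using hk)]
  rfl

theorem of_inr (k : ℕ) (hk : k < n - 1) :
    (PresentedGroup.of (Sum.inr ⟨k, hk⟩) : VB n) = vρ n (k + 1) := by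
  unfold vρ
  rw [fρ_eq n (k + 1) (by omega) (by simpa using hk)]
  rfl

/-! ### Relations in `VB n` -/

theorem rho_sq (i : ℕ) (h1 : 1 ≤ i) (h2 : i ≤ n - 1) : vρ n i * vρ n i = 1 := by
  have h := relOne n (Or.inr ⟨i, h1, h2, rfl⟩)
  rw [map_mul, mkρ] at h
  exact h

theorem rho_inv (i : ℕ) (h1 : 1 ≤ i) (h2 : i ≤ n - 1) : (vρ n i)⁻¹ = vρ n i :=
  inv_eq_of_mul_eq_one_right (rho_sq n i h1 h2)

theorem braid_rho (i : ℕ) (h1 : 1 ≤ i) (h2 : i + 1 ≤ n - 1) :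
    vρ n i * vρ n (i + 1) * vρ n i = vρ n (i + 1) * vρ n i * vρ n (i + 1) := by
  have h := relOne n (Or.inl (Or.inr ⟨i, h1, h2, Or.inr (Or.inl rfl)⟩))
  simp only [map_mul, map_inv, mkρ] at h
  have h2' : (vρ n i * vρ n (i + 1) * vρ n i) *
      (vρ n (i + 1) * vρ n i * vρ n (i + 1))⁻¹ = 1 := by rw [← h]; group
  exact mul_inv_eq_one.mp h2'

theorem braid_sigma (i : ℕ) (h1 : 1 ≤ i) (h2 : i + 1 ≤ n - 1) :
    vσ n i * vσ n (i + 1) * vσ n i = vσ n (i + 1) * vσ n i * vσ n (i + 1) := by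
  have h := relOne n (Or.inl (Or.inr ⟨i, h1, h2, Or.inl rfl⟩))
  simp only [map_mul, map_inv, mkσ] at h
  have h2' : (vσ n i * vσ n (i + 1) * vσ n i) *
      (vσ n (i + 1) * vσ n i * vσ n (i + 1))⁻¹ = 1 := by rw [← h]; group
  exact mul_inv_eq_one.mp h2'

theorem mixed_rel (i : ℕ) (h1 : 1 ≤ i) (h2 : i + 1 ≤ n - 1) :
    vρ n i * vρ n (i + 1) * vσ n i = vσ n (i + 1) * vρ n i * vρ n (i + 1) := by
  have h := relOne n (Or.inl (Or.inr ⟨i, h1, h2, Or.inr (Or.inr rfl)⟩))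
  simp only [map_mul, map_inv, mkσ, mkρ] at h
  have h2' : (vρ n i * vρ n (i + 1) * vσ n i) *
      (vσ n (i + 1) * vρ n i * vρ n (i + 1))⁻¹ = 1 := by rw [← h]; group
  exact mul_inv_eq_one.mp h2'

theorem comm_σσ (i j : ℕ) (h1 : 1 ≤ i) (h2 : i + 2 ≤ j) (h3 : j ≤ n - 1) :
    vσ n i * vσ n j = vσ n j * vσ n i := by
  have h := relOne n (Or.inl (Or.inl ⟨i, j, h1, h2, h3, Or.inl rfl⟩))
  simp only [map_mul, map_inv, mkσ] at h
  have h2' : (vσ n i * vσ n j) * (vσ n j * vσ n i)⁻¹ = 1 := by rw [← h]; group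
  exact mul_inv_eq_one.mp h2'

theorem comm_ρρ (i j : ℕ) (h1 : 1 ≤ i) (h2 : i + 2 ≤ j) (h3 : j ≤ n - 1) :
    vρ n i * vρ n j = vρ n j * vρ n i := by
  have h := relOne n (Or.inl (Or.inl ⟨i, j, h1, h2, h3, Or.inr (Or.inl rfl)⟩))
  simp only [map_mul, map_inv, mkρ] at h
  have h2' : (vρ n i * vρ n j) * (vρ n j * vρ n i)⁻¹ = 1 := by rw [← h]; group
  exact mul_inv_eq_one.mp h2'

theorem comm_σρ (i j : ℕ) (h1 : 1 ≤ i) (h2 : i + 2 ≤ j) (h3 : j ≤ n - 1) :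
    vσ n i * vρ n j = vρ n j * vσ n i := by
  have h := relOne n (Or.inl (Or.inl ⟨i, j, h1, h2, h3, Or.inr (Or.inr (Or.inl rfl))⟩))
  simp only [map_mul, map_inv, mkσ, mkρ] at h
  have h2' : (vσ n i * vρ n j) * (vρ n j * vσ n i)⁻¹ = 1 := by rw [← h]; group
  exact mul_inv_eq_one.mp h2'

theorem comm_ρσ (i j : ℕ) (h1 : 1 ≤ i) (h2 : i + 2 ≤ j) (h3 : j ≤ n - 1) :
    vσ n j * vρ n i = vρ n i * vσ n j := by
  have h := relOne n (Or.inl (Or.inl ⟨i, j, h1, h2, h3, Or.inr (Or.inr (Or.inr rfl))⟩))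
  simp only [map_mul, map_inv, mkσ, mkρ] at h
  have h2' : (vσ n j * vρ n i) * (vρ n i * vσ n j)⁻¹ = 1 := by rw [← h]; group
  exact mul_inv_eq_one.mp h2'

end VBAux
/-! ### Two homomorphisms to abelian groups -/

namespace VBAux
variable (n : ℕ)
open Multiplicative

def dFun : VBGen n → Multiplicative ℤ := Sum.elim (fun _ => ofAdd 1) (fun _ => 1)

def eFun : VBGen n → Multiplicative (ZMod 2) := Sum.elim (fun _ => 1) (fun _ => ofAdd 1)

theorem dRels : ∀ r ∈ vbRels n, FreeGroup.lift (dFun n) r = 1 := by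
  intro r hr
  simp only [vbRels, Set.mem_union, Set.mem_setOf_eq] at hr
  rcases hr with (⟨i, j, hi, hij, hj, hc⟩ | ⟨i, hi, hi1, hc⟩) | ⟨i, hi, hi1, rfl⟩
  · have e1 := fσ_eq n i (by omega) (by omega)
    have e2 := fσ_eq n j (by omega) (by omega)
    have e3 := fρ_eq n i (by omega) (by omega)
    have e4 := fρ_eq n j (by omega) (by omega)
    rcases hc with rfl | rfl | rfl | rfl <;>
      simp only [e1, e2, e3, e4, map_mul, map_inv, FreeGroup.lift_apply_of, dFun,
        Sum.elim_inl, Sum.elim_inr] <;> group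
  · have e1 := fσ_eq n i (by omega) (by omega)
    have e2 := fσ_eq n (i + 1) (by omega) (by omega)
    have e3 := fρ_eq n i (by omega) (by omega)
    have e4 := fρ_eq n (i + 1) (by omega) (by omega)
    rcases hc with rfl | rfl | rfl <;>
      simp only [e1, e2, e3, e4, map_mul, map_inv, FreeGroup.lift_apply_of, dFun,
        Sum.elim_inl, Sum.elim_inr] <;> group
  · have e3 := fρ_eq n i (by omega) (by omega)
    simp only [e3, map_mul, FreeGroup.lift_apply_of, dFun, Sum.elim_inr, mul_one]

theorem eRels : ∀ r ∈ vbRels n, FreeGroup.lift (eFun n) r = 1 := by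
  intro r hr
  simp only [vbRels, Set.mem_union, Set.mem_setOf_eq] at hr
  rcases hr with (⟨i, j, hi, hij, hj, hc⟩ | ⟨i, hi, hi1, hc⟩) | ⟨i, hi, hi1, rfl⟩
  · have e1 := fσ_eq n i (by omega) (by omega)
    have e2 := fσ_eq n j (by omega) (by omega)
    have e3 := fρ_eq n i (by omega) (by omega)
    have e4 := fρ_eq n j (by omega) (by omega)
    rcases hc with rfl | rfl | rfl | rfl <;>
      simp only [e1, e2, e3, e4, map_mul, map_inv, FreeGroup.lift_apply_of, eFun,
        Sum.elim_inl, Sum.elim_inr] <;> group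
  · have e1 := fσ_eq n i (by omega) (by omega)
    have e2 := fσ_eq n (i + 1) (by omega) (by omega)
    have e3 := fρ_eq n i (by omega) (by omega)
    have e4 := fρ_eq n (i + 1) (by omega) (by omega)
    rcases hc with rfl | rfl | rfl <;>
      simp only [e1, e2, e3, e4, map_mul, map_inv, FreeGroup.lift_apply_of, eFun,
        Sum.elim_inl, Sum.elim_inr] <;> group
  · have e3 := fρ_eq n i (by omega) (by omega)
    simp only [e3, map_mul, FreeGroup.lift_apply_of, eFun, Sum.elim_inr]
    decide

def dHom : VB n →* Multiplicative ℤ := PresentedGroup.toGroup (dRels n)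

def eHom : VB n →* Multiplicative (ZMod 2) := PresentedGroup.toGroup (eRels n)

@[simp] theorem dHom_of (z : VBGen n) :
    dHom n (PresentedGroup.of z) = dFun n z := PresentedGroup.toGroup.of _

@[simp] theorem eHom_of (z : VBGen n) :
    eHom n (PresentedGroup.of z) = eFun n z := PresentedGroup.toGroup.of _

end VBAux
namespace VBAux
variable (n : ℕ)
open Multiplicative

def genSet : Set (VB n) :=
  {x | ∃ m : ℤ, x = va n m} ∪
  {x | ∃ m : ℤ, x = vb n m 0 ∨ x = vb n m 1} ∪
  {x | ∃ m : ℤ, x = vf n m 0} ∪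
  {x | ∃ l, 3 ≤ l ∧ l ≤ n - 1 ∧ x = vc n l} ∪
  {x | ∃ (m : ℤ) (l : ℕ), 3 ≤ l ∧ l ≤ n - 1 ∧ x = vg n m l}

def Hsub : Subgroup (VB n) := Subgroup.closure (genSet n)

theorem va_mem (m : ℤ) : va n m ∈ Hsub n :=
  Subgroup.subset_closure (Or.inl (Or.inl (Or.inl (Or.inl ⟨m, rfl⟩))))

theorem vb_mem (m : ℤ) (ε : ℕ) (hε : ε = 0 ∨ ε = 1) : vb n m ε ∈ Hsub n :=
  Subgroup.subset_closure (Or.inl (Or.inl (Or.inl (Or.inr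
    ⟨m, by rcases hε with rfl | rfl; exacts [Or.inl rfl, Or.inr rfl]⟩))))

theorem vf_mem (m : ℤ) : vf n m 0 ∈ Hsub n :=
  Subgroup.subset_closure (Or.inl (Or.inl (Or.inr ⟨m, rfl⟩)))

theorem vc_mem (l : ℕ) (h3 : 3 ≤ l) (hl : l ≤ n - 1) : vc n l ∈ Hsub n :=
  Subgroup.subset_closure (Or.inl (Or.inr ⟨l, h3, hl, rfl⟩))

theorem vg_mem (m : ℤ) (l : ℕ) (h3 : 3 ≤ l) (hl : l ≤ n - 1) : vg n m l ∈ Hsub n :=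
  Subgroup.subset_closure (Or.inr ⟨m, l, h3, hl, rfl⟩)

theorem zmod2_cases (ε : ZMod 2) : ε = 0 ∨ ε = 1 := by revert ε; decide

theorem schreier (hn : 3 ≤ n) (m : ℤ) (ε : ZMod 2) (z : VBGen n) :
    (vσ n 1) ^ m * (vρ n 1) ^ ε.val * PresentedGroup.of z *
      ((vσ n 1) ^ (m + toAdd (dHom n (PresentedGroup.of z))) *
        (vρ n 1) ^ ((ε + toAdd (eHom n (PresentedGroup.of z))).val))⁻¹ ∈ Hsub n := by
  have h1n : 1 ≤ n - 1 := by omega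
  have h2n : 2 ≤ n - 1 := by omega
  have hrinv : (vρ n 1)⁻¹ = vρ n 1 := rho_inv n 1 le_rfl h1n
  rcases z with ⟨k, hk⟩ | ⟨k, hk⟩
  · rw [dHom_of, eHom_of, of_inl n k hk]
    simp only [dFun, eFun, Sum.elim_inl, toAdd_ofAdd, toAdd_one, add_zero]
    rcases zmod2_cases ε with rfl | rfl
    · simp only [ZMod.val_zero, pow_zero, mul_one]
      rcases k with _ | _ | k
      · -- σ₁
        rw [show (0:ℕ)+1 = 1 from rfl]
        have : (vσ n 1) ^ m * vσ n 1 * ((vσ n 1) ^ (m + 1))⁻¹ = 1 := by group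
        rw [this]; exact one_mem _
      · -- σ₂
        rw [show (0:ℕ)+1+1 = 2 from rfl]
        have : (vσ n 1) ^ m * vσ n 2 * ((vσ n 1) ^ (m + 1))⁻¹ = vb n m 0 := by
          unfold vb; simp only [pow_zero, one_mul, mul_one]; group
        rw [this]; exact vb_mem n m 0 (Or.inl rfl)
      · -- σ_l, l = k+3
        rw [show ∀ k:ℕ, k+1+1+1 = k+3 from fun _ => rfl]
        have hsw : (vσ n 1) ^ m * vσ n (k + 3) = vσ n (k + 3) * (vσ n 1) ^ m := by
          have hc : Commute (vσ n (k + 3)) (vσ n 1) :=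
            (comm_σσ n 1 (k + 3) le_rfl (by omega) (by omega)).symm
          exact ((hc.zpow_right m).eq).symm
        have : (vσ n 1) ^ m * vσ n (k + 3) * ((vσ n 1) ^ (m + 1))⁻¹ = vc n (k + 3) := by
          rw [hsw]; unfold vc; group
        rw [this]; exact vc_mem n (k + 3) (by omega) (by omega)
    · have hv1 : (1 : ZMod 2).val = 1 := rfl
      simp only [hv1, pow_one]
      rcases k with _ | _ | k
      · -- σ₁, ε = 1 : a_m
        rw [show (0:ℕ)+1 = 1 from rfl]
        have : (vσ n 1) ^ m * vρ n 1 * vσ n 1 * ((vσ n 1) ^ (m + 1) * vρ n 1)⁻¹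
            = va n m := by
          unfold va; rw [mul_inv_rev, hrinv]; group
        rw [this]; exact va_mem n m
      · -- σ₂, ε = 1 : b_{m,1}
        rw [show (0:ℕ)+1+1 = 2 from rfl]
        have : (vσ n 1) ^ m * vρ n 1 * vσ n 2 * ((vσ n 1) ^ (m + 1) * vρ n 1)⁻¹
            = vb n m 1 := by
          unfold vb; rw [mul_inv_rev, hrinv]; simp only [pow_one]; group
        rw [this]; exact vb_mem n m 1 (Or.inr rfl)
      · -- σ_l, ε = 1 : c_l
        rw [show ∀ k:ℕ, k+1+1+1 = k+3 from fun _ => rfl]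
        have hρσ : vρ n 1 * vσ n (k + 3) = vσ n (k + 3) * vρ n 1 :=
          (comm_ρσ n 1 (k + 3) le_rfl (by omega) (by omega)).symm
        have hsw : (vσ n 1) ^ m * vσ n (k + 3) = vσ n (k + 3) * (vσ n 1) ^ m := by
          have hc : Commute (vσ n (k + 3)) (vσ n 1) :=
            (comm_σσ n 1 (k + 3) le_rfl (by omega) (by omega)).symm
          exact ((hc.zpow_right m).eq).symm
        have : (vσ n 1) ^ m * vρ n 1 * vσ n (k + 3) * ((vσ n 1) ^ (m + 1) * vρ n 1)⁻¹
            = vc n (k + 3) := by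
          rw [mul_inv_rev, mul_assoc ((vσ n 1) ^ m), hρσ, ← mul_assoc ((vσ n 1) ^ m), hsw]
          unfold vc; group
        rw [this]; exact vc_mem n (k + 3) (by omega) (by omega)
  · rw [dHom_of, eHom_of, of_inr n k hk]
    simp only [dFun, eFun, Sum.elim_inr, toAdd_ofAdd, toAdd_one, add_zero]
    rcases zmod2_cases ε with rfl | rfl
    · have hv1' : ZMod.val (1 : ZMod 2) = 1 := rfl
      simp only [ZMod.val_zero, pow_zero, mul_one, zero_add, hv1', pow_one]
      rcases k with _ | _ | k
      · -- ρ₁, ε = 0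
        rw [show (0:ℕ)+1 = 1 from rfl]
        have : (vσ n 1) ^ m * vρ n 1 * ((vσ n 1) ^ m * vρ n 1)⁻¹ = 1 := by group
        rw [this]; exact one_mem _
      · -- ρ₂, ε = 0 : f_m
        rw [show (0:ℕ)+1+1 = 2 from rfl]
        have : (vσ n 1) ^ m * vρ n 2 * ((vσ n 1) ^ m * vρ n 1)⁻¹ = vf n m 0 := by
          rw [mul_inv_rev, hrinv]; unfold vf
          simp only [pow_zero, one_mul, zero_add, pow_one]; group
        rw [this]; exact vf_mem n m
      · -- ρ_l, ε = 0 : g_{m,l}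
        rw [show ∀ k:ℕ, k+1+1+1 = k+3 from fun _ => rfl]
        have : (vσ n 1) ^ m * vρ n (k + 3) * ((vσ n 1) ^ m * vρ n 1)⁻¹ = vg n m (k + 3) := by
          rw [mul_inv_rev, hrinv]; unfold vg; group
        rw [this]; exact vg_mem n m (k + 3) (by omega) (by omega)
    · have hv11 : ZMod.val ((1 : ZMod 2) + 1) = 0 := rfl
      have hv1' : ZMod.val (1 : ZMod 2) = 1 := rfl
      simp only [hv11, hv1', pow_zero, pow_one, mul_one]
      rcases k with _ | _ | k
      · -- ρ₁, ε = 1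
        rw [show (0:ℕ)+1 = 1 from rfl]
        have : (vσ n 1) ^ m * vρ n 1 * vρ n 1 * ((vσ n 1) ^ m)⁻¹ = 1 := by
          rw [mul_assoc ((vσ n 1) ^ m), rho_sq n 1 le_rfl h1n]; group
        rw [this]; exact one_mem _
      · -- ρ₂, ε = 1 : f_m⁻¹
        rw [show (0:ℕ)+1+1 = 2 from rfl]
        have hrinv2 : (vρ n 2)⁻¹ = vρ n 2 := rho_inv n 2 (by omega) h2n
        have : (vσ n 1) ^ m * vρ n 1 * vρ n 2 * ((vσ n 1) ^ m)⁻¹ = (vf n m 0)⁻¹ := by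
          rw [← inv_inj, inv_inv]
          simp only [mul_inv_rev, inv_inv, hrinv, hrinv2]
          unfold vf
          simp only [pow_zero, one_mul, zero_add, pow_one]; group
        rw [this]; exact inv_mem (vf_mem n m)
      · -- ρ_l, ε = 1 : g_{m,l}
        rw [show ∀ k:ℕ, k+1+1+1 = k+3 from fun _ => rfl]
        have hc : vρ n 1 * vρ n (k + 3) = vρ n (k + 3) * vρ n 1 :=
          comm_ρρ n 1 (k + 3) le_rfl (by omega) (by omega)
        have : (vσ n 1) ^ m * vρ n 1 * vρ n (k + 3) * ((vσ n 1) ^ m)⁻¹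
            = vg n m (k + 3) := by
          rw [mul_assoc ((vσ n 1) ^ m), hc]; unfold vg; group
        rw [this]; exact vg_mem n m (k + 3) (by omega) (by omega)

end VBAux
namespace VBAux
variable (n : ℕ)
open Multiplicative

noncomputable def rep (g : VB n) : VB n :=
  (vσ n 1) ^ (toAdd (dHom n g)) * (vρ n 1) ^ ((toAdd (eHom n g)).val)

theorem rep_one : rep n 1 = 1 := by
  unfold rep
  simp

theorem step_mul (hn : 3 ≤ n) (h0 : VB n) (z : VBGen n) :
    rep n h0 * PresentedGroup.of z * (rep n (h0 * PresentedGroup.of z))⁻¹ ∈ Hsub n := by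
  unfold rep
  rw [show dHom n (h0 * PresentedGroup.of z)
        = dHom n h0 * dHom n (PresentedGroup.of z) from map_mul _ _ _,
    show eHom n (h0 * PresentedGroup.of z)
        = eHom n h0 * eHom n (PresentedGroup.of z) from map_mul _ _ _,
    toAdd_mul, toAdd_mul]
  exact schreier n hn (toAdd (dHom n h0)) (toAdd (eHom n h0)) z

theorem step_inv (hn : 3 ≤ n) (h0 : VB n) (z : VBGen n) :
    rep n h0 * (PresentedGroup.of z)⁻¹ * (rep n (h0 * (PresentedGroup.of z)⁻¹))⁻¹ ∈ Hsub n := by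
  have h1 := step_mul n hn (h0 * (PresentedGroup.of z)⁻¹) z
  rw [inv_mul_cancel_right] at h1
  have h2 := inv_mem h1
  have e : (rep n (h0 * (PresentedGroup.of z)⁻¹) * PresentedGroup.of z * (rep n h0)⁻¹)⁻¹
      = rep n h0 * (PresentedGroup.of z)⁻¹ * (rep n (h0 * (PresentedGroup.of z)⁻¹))⁻¹ := by
    group
  rwa [e] at h2

theorem key (hn : 3 ≤ n) (g : VB n) : g * (rep n g)⁻¹ ∈ Hsub n := by
  have hg : g ∈ Submonoid.closure
      (Set.range (PresentedGroup.of : VBGen n → VB n) ∪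
        (Set.range (PresentedGroup.of : VBGen n → VB n))⁻¹) := by
    rw [← Subgroup.closure_toSubmonoid, Subgroup.mem_toSubmonoid,
      PresentedGroup.closure_range_of]
    trivial
  have main : ∀ g' ∈ Submonoid.closure
      (Set.range (PresentedGroup.of : VBGen n → VB n) ∪
        (Set.range (PresentedGroup.of : VBGen n → VB n))⁻¹),
      ∀ h0 : VB n, h0 * (rep n h0)⁻¹ ∈ Hsub n →
        (h0 * g') * (rep n (h0 * g'))⁻¹ ∈ Hsub n := by
    intro g' hg'
    induction hg' using Submonoid.closure_induction with
    | mem x hx =>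
      intro h0 hP
      rcases hx with ⟨z, rfl⟩ | hx
      · have decomp : (h0 * PresentedGroup.of z) * (rep n (h0 * PresentedGroup.of z))⁻¹
            = (h0 * (rep n h0)⁻¹) *
              (rep n h0 * PresentedGroup.of z * (rep n (h0 * PresentedGroup.of z))⁻¹) := by
          group
        rw [decomp]
        exact mul_mem hP (step_mul n hn h0 z)
      · obtain ⟨z, hz⟩ := hx
        have hxz : x = (PresentedGroup.of z)⁻¹ := by
          rw [hz, inv_inv]
        subst hxz
        have decomp : (h0 * (PresentedGroup.of z)⁻¹) *
              (rep n (h0 * (PresentedGroup.of z)⁻¹))⁻¹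
            = (h0 * (rep n h0)⁻¹) *
              (rep n h0 * (PresentedGroup.of z)⁻¹ *
                (rep n (h0 * (PresentedGroup.of z)⁻¹))⁻¹) := by
          group
        rw [decomp]
        exact mul_mem hP (step_inv n hn h0 z)
    | one =>
      intro h0 hP
      simpa using hP
    | mul x y hx hy ihx ihy =>
      intro h0 hP
      have := ihy (h0 * x) (ihx h0 hP)
      rwa [← mul_assoc h0 x y]
  have := main g hg 1 (by rw [rep_one]; simpa using one_mem (Hsub n))
  simpa using this

theorem commutator_le_Hsub (hn : 3 ≤ n) : commutator (VB n) ≤ Hsub n := by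
  intro g hg
  have hd : dHom n g = 1 := Abelianization.commutator_subset_ker (dHom n) hg
  have he : eHom n g = 1 := Abelianization.commutator_subset_ker (eHom n) hg
  have hrep : rep n g = 1 := by
    unfold rep
    rw [hd, he]
    simp
  have := key n hn g
  rwa [hrep, inv_one, mul_one] at this

end VBAux
namespace VBAux
variable (n : ℕ)
open scoped commutatorElement

theorem commutatorElt_mem (g h : VB n) : ⁅g, h⁆ ∈ commutator (VB n) :=
  Subgroup.commutator_mem_commutator (Subgroup.mem_top g) (Subgroup.mem_top h)

theorem conj_mem' {x : VB n} (hx : x ∈ commutator (VB n)) (g : VB n) :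
    g * x * g⁻¹ ∈ commutator (VB n) :=
  Subgroup.Normal.conj_mem inferInstance x hx g

/-- σ_{i+1} = (ρ_i ρ_{i+1}) σ_i (ρ_i ρ_{i+1})⁻¹ (expanded form). -/
theorem sigma_succ_eq (i : ℕ) (h1 : 1 ≤ i) (h2 : i + 1 ≤ n - 1) :
    vσ n (i + 1) = vρ n i * vρ n (i + 1) * vσ n i * (vρ n (i + 1))⁻¹ * (vρ n i)⁻¹ := by
  rw [eq_mul_inv_iff_mul_eq, eq_mul_inv_iff_mul_eq]
  exact (mixed_rel n i h1 h2).symm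

theorem rho_succ_eq (i : ℕ) (h1 : 1 ≤ i) (h2 : i + 1 ≤ n - 1) :
    vρ n (i + 1) = vρ n i * vρ n (i + 1) * vρ n i * (vρ n (i + 1))⁻¹ * (vρ n i)⁻¹ := by
  rw [eq_mul_inv_iff_mul_eq, eq_mul_inv_iff_mul_eq]
  exact (braid_rho n i h1 h2).symm

theorem sigma_step_mem (i : ℕ) (h1 : 1 ≤ i) (h2 : i + 1 ≤ n - 1) :
    vσ n (i + 1) * (vσ n i)⁻¹ ∈ commutator (VB n) := by
  have hkey : vσ n (i + 1) * (vσ n i)⁻¹ = ⁅vρ n i * vρ n (i + 1), vσ n i⁆ := by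
    rw [commutatorElement_def, sigma_succ_eq n i h1 h2]
    group
  rw [hkey]
  exact commutatorElt_mem n _ _

theorem rho_step_mem (i : ℕ) (h1 : 1 ≤ i) (h2 : i + 1 ≤ n - 1) :
    vρ n (i + 1) * (vρ n i)⁻¹ ∈ commutator (VB n) := by
  have hkey : vρ n (i + 1) * (vρ n i)⁻¹ = ⁅vρ n i * vρ n (i + 1), vρ n i⁆ := by
    rw [commutatorElement_def]
    conv_lhs => rw [rho_succ_eq n i h1 h2]
    group
  rw [hkey]
  exact commutatorElt_mem n _ _

theorem sigma_chain_mem (l : ℕ) (h1 : 1 ≤ l) (h2 : l ≤ n - 1) :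
    vσ n l * (vσ n 1)⁻¹ ∈ commutator (VB n) := by
  induction l, h1 using Nat.le_induction with
  | base => simpa using one_mem _
  | succ l hl ih =>
    have e : vσ n (l + 1) * (vσ n 1)⁻¹
        = (vσ n (l + 1) * (vσ n l)⁻¹) * (vσ n l * (vσ n 1)⁻¹) := by group
    rw [e]
    exact mul_mem (sigma_step_mem n l hl h2) (ih (by omega))

theorem rho_chain_mem (l : ℕ) (h1 : 1 ≤ l) (h2 : l ≤ n - 1) :
    vρ n l * (vρ n 1)⁻¹ ∈ commutator (VB n) := by
  induction l, h1 using Nat.le_induction with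
  | base => simpa using one_mem _
  | succ l hl ih =>
    have e : vρ n (l + 1) * (vρ n 1)⁻¹
        = (vρ n (l + 1) * (vρ n l)⁻¹) * (vρ n l * (vρ n 1)⁻¹) := by group
    rw [e]
    exact mul_mem (rho_step_mem n l hl h2) (ih (by omega))

theorem va_mem_commutator (hn : 3 ≤ n) (m : ℤ) : va n m ∈ commutator (VB n) := by
  have h1n : 1 ≤ n - 1 := by omega
  have e : va n m = (vσ n 1) ^ m * ⁅vρ n 1, vσ n 1⁆ * ((vσ n 1) ^ m)⁻¹ := by
    unfold va
    rw [commutatorElement_def, rho_inv n 1 le_rfl h1n]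
    group
  rw [e]
  exact conj_mem' n (commutatorElt_mem n _ _) _

theorem vb0_mem_commutator (hn : 3 ≤ n) (m : ℤ) : vb n m 0 ∈ commutator (VB n) := by
  have e : vb n m 0 = (vσ n 1) ^ m * (vσ n 2 * (vσ n 1)⁻¹) * ((vσ n 1) ^ m)⁻¹ := by
    unfold vb
    simp only [pow_zero, one_mul, mul_one]
    group
  rw [e]
  exact conj_mem' n (sigma_step_mem n 1 le_rfl (by omega)) _

theorem vb1_mem_commutator (hn : 3 ≤ n) (m : ℤ) : vb n m 1 ∈ commutator (VB n) := by
  have h1n : 1 ≤ n - 1 := by omega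
  have e : vb n m 1 = (vσ n 1) ^ m *
      (⁅vρ n 1, vσ n 2⁆ * (vσ n 2 * (vσ n 1)⁻¹)) * ((vσ n 1) ^ m)⁻¹ := by
    unfold vb
    rw [commutatorElement_def, rho_inv n 1 le_rfl h1n]
    simp only [pow_one]
    group
  rw [e]
  exact conj_mem' n
    (mul_mem (commutatorElt_mem n _ _) (sigma_step_mem n 1 le_rfl (by omega))) _

theorem vf_mem_commutator (hn : 3 ≤ n) (m : ℤ) : vf n m 0 ∈ commutator (VB n) := by
  have h1n : 1 ≤ n - 1 := by omega
  have e : vf n m 0 = (vσ n 1) ^ m * (vρ n 2 * (vρ n 1)⁻¹) * ((vσ n 1) ^ m)⁻¹ := by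
    rw [rho_inv n 1 le_rfl h1n]
    unfold vf
    simp only [pow_zero, one_mul, zero_add, pow_one]
    group
  rw [e]
  exact conj_mem' n (rho_chain_mem n 2 (by omega) (by omega)) _

theorem vc_mem_commutator (l : ℕ) (h3 : 3 ≤ l) (hl : l ≤ n - 1) :
    vc n l ∈ commutator (VB n) :=
  sigma_chain_mem n l (by omega) hl

theorem vg_mem_commutator (hn : 3 ≤ n) (m : ℤ) (l : ℕ) (h3 : 3 ≤ l) (hl : l ≤ n - 1) :
    vg n m l ∈ commutator (VB n) := by
  have h1n : 1 ≤ n - 1 := by omega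
  have e : vg n m l = (vσ n 1) ^ m * (vρ n l * (vρ n 1)⁻¹) * ((vσ n 1) ^ m)⁻¹ := by
    rw [rho_inv n 1 le_rfl h1n]
    unfold vg
    group
  rw [e]
  exact conj_mem' n (rho_chain_mem n l (by omega) hl) _

theorem Hsub_le_commutator (hn : 3 ≤ n) : Hsub n ≤ commutator (VB n) := by
  unfold Hsub
  rw [Subgroup.closure_le]
  rintro x hx
  simp only [genSet, Set.mem_union, Set.mem_setOf_eq] at hx
  rcases hx with ((((⟨m, rfl⟩ | ⟨m, hb⟩) | ⟨m, rfl⟩) | ⟨l, h3, hl, rfl⟩) | ⟨m, l, h3, hl, rfl⟩)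
  · exact va_mem_commutator n hn m
  · rcases hb with rfl | rfl
    · exact vb0_mem_commutator n hn m
    · exact vb1_mem_commutator n hn m
  · exact vf_mem_commutator n hn m
  · exact vc_mem_commutator n l h3 hl
  · exact vg_mem_commutator n hn m l h3 hl

end VBAux
/-- For `n ≥ 3`, `VB_n'` is the subgroup generated by
`{a_m} ∪ {b_{m,0}, b_{m,1}} ∪ {f_m} ∪ {c_l : 3 ≤ l ≤ n-1} ∪ {g_{m,l} : 3 ≤ l ≤ n-1}`. -/
theorem VB_commutator_infinite_generators (n : ℕ) (hn : 3 ≤ n) :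
    commutator (VB n) = Subgroup.closure
      ({x | ∃ m : ℤ, x = va n m} ∪
       {x | ∃ m : ℤ, x = vb n m 0 ∨ x = vb n m 1} ∪
       {x | ∃ m : ℤ, x = vf n m 0} ∪
       {x | ∃ l, 3 ≤ l ∧ l ≤ n - 1 ∧ x = vc n l} ∪
       {x | ∃ (m : ℤ) (l : ℕ), 3 ≤ l ∧ l ≤ n - 1 ∧ x = vg n m l}) := by
  show commutator (VB n) = VBAux.Hsub n
  exact le_antisymm (VBAux.commutator_le_Hsub n hn) (VBAux.Hsub_le_commutator n hn)
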